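/- Let γ > 0 and let V be a k-dimensional linear subspace of ℝⁿ admitting a disjoint basis. If b = (b_1, …, b_k) is a basis of V that is not disjoint, then there exists a basis b' of V with L_sbr(b') < L_sbr(b); that is, non-disjoint bases are never minimizers of the standard basis regularization loss over the set of bases of V. -/

import Mathlib

open Finset

/-- Euclidean inner product of the entrywise absolute values of two vectors in `ℝⁿ`. -/
def absDot {n : ℕ} (v w : Fin n → ℝ) : ℝ := ∑ ℓ : Fin n, |v ℓ| * |w ℓ|

/-- Euclidean norm of a vector in `ℝⁿ`. -/
noncomputable def euclNorm {n : ℕ} (v : Fin n → ℝ) : ℝ := Real.sqrt (∑ ℓ : Fin n, (v ℓ) ^ 2)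

/-- The standard basis regularization loss
`L_sbr(b) = γ Σ_{1 ≤ i < j ≤ k} (|b_i| · |b_j|) / (‖b_i‖ ‖b_j‖)`. -/
noncomputable def Lsbr {n k : ℕ} (γ : ℝ) (b : Fin k → Fin n → ℝ) : ℝ :=
  γ * ∑ i : Fin k, ∑ j : Fin k,
    if i < j then absDot (b i) (b j) / (euclNorm (b i) * euclNorm (b j)) else 0

/-- A family of vectors is disjoint if the supports of distinct members are disjoint. -/
def DisjointFamily {n k : ℕ} (b : Fin k → Fin n → ℝ) : Prop :=
  ∀ i j : Fin k, i ≠ j → Disjoint (Function.support (b i)) (Function.support (b j))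

/-- `b` is a basis of the subspace `V ⊆ ℝⁿ`: it is linearly independent and spans `V`. -/
def IsBasisOf {n k : ℕ} (V : Submodule ℝ (Fin n → ℝ)) (b : Fin k → Fin n → ℝ) : Prop :=
  LinearIndependent ℝ b ∧ Submodule.span ℝ (Set.range b) = V

lemma absDot_nonneg {n : ℕ} (v w : Fin n → ℝ) : 0 ≤ absDot v w :=
  Finset.sum_nonneg fun ℓ _ => mul_nonneg (abs_nonneg _) (abs_nonneg _)

lemma euclNorm_nonneg' {n : ℕ} (v : Fin n → ℝ) : 0 ≤ euclNorm v := Real.sqrt_nonneg _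

lemma euclNorm_pos {n : ℕ} {v : Fin n → ℝ} (hv : v ≠ 0) : 0 < euclNorm v := by
  apply Real.sqrt_pos.2
  obtain ⟨ℓ, hℓ⟩ : ∃ ℓ, v ℓ ≠ 0 := Function.ne_iff.1 hv
  exact Finset.sum_pos' (fun i _ => sq_nonneg _)
    ⟨ℓ, Finset.mem_univ _, by positivity⟩

lemma term_nonneg {n : ℕ} (v w : Fin n → ℝ) :
    0 ≤ absDot v w / (euclNorm v * euclNorm w) :=
  div_nonneg (absDot_nonneg v w) (mul_nonneg (euclNorm_nonneg' v) (euclNorm_nonneg' w))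

/-- If a `k`-dimensional subspace `V` of `ℝⁿ` admits a disjoint basis and `b` is a basis
of `V` that is not disjoint, then some basis `b'` of `V` has strictly smaller standard
basis regularization loss; non-disjoint bases are never minimizers. -/
theorem exists_basis_lsbr_lt_of_not_disjoint {n k : ℕ} (γ : ℝ) (hγ : 0 < γ)
    (V : Submodule ℝ (Fin n → ℝ)) (hV : Module.finrank ℝ V = k)
    (hexists : ∃ b₀ : Fin k → Fin n → ℝ, IsBasisOf V b₀ ∧ DisjointFamily b₀)
    (b : Fin k → Fin n → ℝ) (hb : IsBasisOf V b) (hnd : ¬ DisjointFamily b) :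
    ∃ b' : Fin k → Fin n → ℝ, IsBasisOf V b' ∧ Lsbr γ b' < Lsbr γ b := by
  obtain ⟨b₀, hb₀, hdisj⟩ := hexists
  refine ⟨b₀, hb₀, ?_⟩
  have h0 : Lsbr γ b₀ = 0 := by
    unfold Lsbr
    rw [mul_eq_zero]
    right
    apply Finset.sum_eq_zero
    intro i _
    apply Finset.sum_eq_zero
    intro j _
    split_ifs with hij
    · have : absDot (b₀ i) (b₀ j) = 0 := by
        apply Finset.sum_eq_zero
        intro ℓ _
        by_cases h1 : b₀ i ℓ = 0
        · simp [h1]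
        · have h2 : b₀ j ℓ = 0 := by
            by_contra h2
            exact Set.disjoint_left.1 (hdisj i j (ne_of_lt hij)) h1 h2
          simp [h2]
      simp [this]
    · rfl
  rw [h0]
  -- get a non-disjoint pair with i < j
  simp only [DisjointFamily, not_forall] at hnd
  obtain ⟨i, j, hij, hnotdisj⟩ := hnd
  rw [Set.not_disjoint_iff] at hnotdisj
  obtain ⟨ℓ, hℓi, hℓj⟩ := hnotdisj
  have hne : ∀ m : Fin k, b m ≠ 0 := fun m => hb.1.ne_zero m
  have hterm : ∀ p q : Fin k, p ≠ q → (∃ ℓ₀, b p ℓ₀ ≠ 0 ∧ b q ℓ₀ ≠ 0) →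
      0 < absDot (b p) (b q) / (euclNorm (b p) * euclNorm (b q)) := by
    intro p q _ ⟨ℓ₀, h1, h2⟩
    apply div_pos
    · exact Finset.sum_pos' (fun x _ => mul_nonneg (abs_nonneg _) (abs_nonneg _))
        ⟨ℓ₀, Finset.mem_univ _, mul_pos (abs_pos.2 h1) (abs_pos.2 h2)⟩
    · exact mul_pos (euclNorm_pos (hne p)) (euclNorm_pos (hne q))
  have key : ∃ p q : Fin k, p < q ∧
      0 < absDot (b p) (b q) / (euclNorm (b p) * euclNorm (b q)) := by
    rcases lt_or_gt_of_ne hij with h | h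
    · exact ⟨i, j, h, hterm i j hij ⟨ℓ, hℓi, hℓj⟩⟩
    · exact ⟨j, i, h, hterm j i (Ne.symm hij) ⟨ℓ, hℓj, hℓi⟩⟩
  obtain ⟨p, q, hpq, hpos⟩ := key
  unfold Lsbr
  apply mul_pos hγ
  apply Finset.sum_pos'
  · intro x _
    exact Finset.sum_nonneg fun y _ => by
      split_ifs
      · exact term_nonneg _ _
      · exact le_refl 0
  · refine ⟨p, Finset.mem_univ _, ?_⟩
    apply Finset.sum_pos'
    · intro y _
      split_ifs
      · exact term_nonneg _ _
      · exact le_refl 0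
    · exact ⟨q, Finset.mem_univ _, by rw [if_pos hpq]; exact hpos⟩
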